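/- Fix a norm ‖·‖ on ℝ^d and let 1 ≤ p ≤ d. Let S be a finite Borel measure on S^{d-1}_+ with σ_j := ∫ a_j S(da) > 0 for all j = 1,…,d. Set σ_min := min_j σ_j, σ_max := max_j σ_j and κ := (Σ_{k=p+1}^d σ_k + σ_max)/σ_min. Define R_S(B,W) := ∫_{S^{d-1}_+} Σ_{k=1}^d |(B ⋄ W ⋄ a)_k − a_k| S(da) for B ∈ [0,∞)^{d×p}, W ∈ [0,∞)^{p×d}. Then there exists a pair (B*, W*) ∈ [0,κ]^{d×p} × [0,1]^{p×d} such that R_S(B*, W*) = inf { R_S(B,W) : B ∈ [0,∞)^{d×p}, W ∈ [0,∞)^{p×d} }; in particular, a global minimizer of the reconstruction error exists and can be found in the compact set [0,κ]^{d×p} × [0,1]^{p×d}. -/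

import Mathlib

open MeasureTheory Finset

/-- Max-linear action of a nonnegative matrix on a vector:
`(H ⋄ x) i = max_l H i l * x l`. -/
noncomputable def maxVec {p d : ℕ} (H : Fin p → Fin d → ℝ) (x : Fin d → ℝ) : Fin p → ℝ :=
  fun i => ⨆ l, H i l * x l

/-- The reconstruction error `R_S(B,W) = ∫ Σ_k |(B ⋄ W ⋄ a)_k − a_k| S(da)` of the
matrix pair `(B,W)` for the max-stable distribution with spectral measure `S`. -/
noncomputable def recErr {d p : ℕ} (S : Measure (Fin d → ℝ))
    (B : Fin d → Fin p → ℝ) (W : Fin p → Fin d → ℝ) : ℝ :=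
  ∫ a, ∑ k, |maxVec B (maxVec W a) k - a k| ∂S

lemma fin_le_ciSup {n : ℕ} (f : Fin n → ℝ) (i : Fin n) : f i ≤ ⨆ j, f j :=
  le_ciSup (Set.Finite.bddAbove (Set.finite_range f)) i

lemma fin_abs_ciSup_le {n : ℕ} [NeZero n] {f : Fin n → ℝ} {M : ℝ} (h : ∀ i, |f i| ≤ M) :
    |⨆ i, f i| ≤ M := by
  rw [abs_le]
  refine ⟨le_trans ((abs_le.1 (h 0)).1) (fin_le_ciSup f 0), ciSup_le fun i => (abs_le.1 (h i)).2⟩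

lemma fin_continuous_ciSup {n : ℕ} [NeZero n] {X : Type*} [TopologicalSpace X]
    {f : Fin n → X → ℝ} (hf : ∀ i, Continuous (f i)) :
    Continuous fun x => ⨆ i, f i x := by
  haveI : Nonempty (Fin n) := ⟨0⟩
  have h : (fun x => ⨆ i, f i x) = fun x => univ.sup' univ_nonempty (fun i => f i x) := by
    funext x
    exact (Finset.sup'_univ_eq_ciSup _).symm
  rw [h]
  exact Continuous.finset_sup'_apply univ_nonempty fun i _ => hf i

lemma abs_maxVec_le {p d : ℕ} [NeZero d] {H : Fin p → Fin d → ℝ} {x : Fin d → ℝ} {R C : ℝ}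
    (hH : ∀ i l, |H i l| ≤ R) (hx : ∀ l, |x l| ≤ C) (i : Fin p) : |maxVec H x i| ≤ R * C := by
  refine fin_abs_ciSup_le fun l => ?_
  rw [abs_mul]
  exact mul_le_mul (hH i l) (hx l) (abs_nonneg _) (le_trans (abs_nonneg _) (hH i 0))

lemma continuous_recon_a {p d : ℕ} [NeZero p] [NeZero d]
    (B : Fin d → Fin p → ℝ) (W : Fin p → Fin d → ℝ) :
    Continuous fun a : Fin d → ℝ => ∑ k, |maxVec B (maxVec W a) k - a k| := by
  have h1 : ∀ i : Fin p, Continuous fun a : Fin d → ℝ => maxVec W a i := fun i =>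
    fin_continuous_ciSup fun l => (continuous_const.mul (continuous_apply l))
  have h2 : ∀ k : Fin d, Continuous fun a : Fin d → ℝ => maxVec B (maxVec W a) k := fun k =>
    fin_continuous_ciSup fun i => continuous_const.mul (h1 i)
  exact continuous_finset_sum _ fun k _ => ((h2 k).sub (continuous_apply k)).abs

lemma continuous_recon_pair {p d : ℕ} [NeZero p] [NeZero d] (a : Fin d → ℝ) :
    Continuous fun q : (Fin d → Fin p → ℝ) × (Fin p → Fin d → ℝ) =>
      ∑ k, |maxVec q.1 (maxVec q.2 a) k - a k| := by
  have h1 : ∀ i : Fin p, Continuous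
      fun q : (Fin d → Fin p → ℝ) × (Fin p → Fin d → ℝ) => maxVec q.2 a i := fun i =>
    fin_continuous_ciSup fun l => by
      fun_prop
  have h2 : ∀ k : Fin d, Continuous
      fun q : (Fin d → Fin p → ℝ) × (Fin p → Fin d → ℝ) => maxVec q.1 (maxVec q.2 a) k := fun k =>
    fin_continuous_ciSup fun i => by
      have := h1 i
      fun_prop
  exact continuous_finset_sum _ fun k _ => ((h2 k).sub continuous_const).abs

lemma sum_abs_recon_le {p d : ℕ} [NeZero p] [NeZero d] {B : Fin d → Fin p → ℝ}
    {W : Fin p → Fin d → ℝ} {a : Fin d → ℝ} {R C : ℝ}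
    (hB : ∀ k i, |B k i| ≤ R) (hW : ∀ i l, |W i l| ≤ R) (ha : ∀ l, |a l| ≤ C) :
    ‖∑ k, |maxVec B (maxVec W a) k - a k|‖ ≤ (d : ℝ) * (R * (R * C) + C) := by
  have h2 : ∀ i, |maxVec W a i| ≤ R * C := abs_maxVec_le hW ha
  have h3 : ∀ k, |maxVec B (maxVec W a) k| ≤ R * (R * C) := abs_maxVec_le hB h2
  have h1 : ∀ k : Fin d, |maxVec B (maxVec W a) k - a k| ≤ R * (R * C) + C := by
    intro k
    rw [sub_eq_add_neg]
    refine (abs_add_le _ _).trans ?_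
    rw [abs_neg]
    exact add_le_add (h3 k) (ha k)
  rw [Real.norm_eq_abs, abs_of_nonneg (Finset.sum_nonneg fun k _ => abs_nonneg _)]
  calc ∑ k, |maxVec B (maxVec W a) k - a k| ≤ ∑ _k : Fin d, (R * (R * C) + C) :=
        Finset.sum_le_sum fun k _ => h1 k
    _ = (d : ℝ) * (R * (R * C) + C) := by
        rw [Finset.sum_const, Finset.card_univ, Fintype.card_fin, nsmul_eq_mul]

lemma exists_coord_bound {d : ℕ} [NeZero d] (N : (Fin d → ℝ) → ℝ)
    (hN_tri : ∀ x y, N (x + y) ≤ N x + N y)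
    (hN_smul : ∀ (c : ℝ) (x), N (c • x) = |c| * N x)
    (hN_def : ∀ x, N x = 0 → x = 0) :
    ∃ C : ℝ, 0 ≤ C ∧ ∀ x : Fin d → ℝ, N x = 1 → ∀ j, |x j| ≤ C := by
  have hN0 : N 0 = 0 := by simpa using hN_smul 0 0
  have hNneg : ∀ x, 0 ≤ N x := by
    intro x
    have h1 := hN_tri x (-x)
    rw [add_neg_cancel, hN0] at h1
    have h2 : N (-x) = N x := by simpa using hN_smul (-1) x
    linarith
  -- N is dominated by a multiple of the sup norm
  set M : ℝ := ∑ i : Fin d, N (fun j => if i = j then (1:ℝ) else 0) with hM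
  have hNsum : ∀ (s : Finset (Fin d)) (f : Fin d → (Fin d → ℝ)),
      N (∑ i ∈ s, f i) ≤ ∑ i ∈ s, N (f i) := by
    intro s
    induction s using Finset.induction_on with
    | empty => intro f; simp [hN0]
    | insert _ _ hnotmem ih =>
      intro f
      rw [Finset.sum_insert hnotmem, Finset.sum_insert hnotmem]
      exact (hN_tri _ _).trans (add_le_add_right (ih f) _)
  have hNle : ∀ z : Fin d → ℝ, N z ≤ M * ‖z‖ := by
    intro z
    have hz : z = ∑ i : Fin d, z i • (fun j => if i = j then (1:ℝ) else 0) := pi_eq_sum_univ z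
    calc N z = N (∑ i : Fin d, z i • (fun j => if i = j then (1:ℝ) else 0)) := by rw [← hz]
      _ ≤ ∑ i : Fin d, N (z i • (fun j => if i = j then (1:ℝ) else 0)) := hNsum _ _
      _ = ∑ i : Fin d, |z i| * N (fun j => if i = j then (1:ℝ) else 0) := by
          simp_rw [hN_smul]
      _ ≤ ∑ i : Fin d, ‖z‖ * N (fun j => if i = j then (1:ℝ) else 0) := by
          refine Finset.sum_le_sum fun i _ => ?_
          exact mul_le_mul_of_nonneg_right (norm_le_pi_norm z i) (hNneg _)
      _ = M * ‖z‖ := by rw [← Finset.mul_sum, mul_comm]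
  have hcont : Continuous N := by
    have hM0 : 0 ≤ M := Finset.sum_nonneg fun i _ => hNneg _
    refine (LipschitzWith.of_dist_le_mul (K := ⟨M, hM0⟩) ?_).continuous
    intro x y
    have h1 : N x ≤ N y + N (x - y) := by
      have := hN_tri y (x - y)
      simpa using this
    have h2 : N y ≤ N x + N (y - x) := by
      have := hN_tri x (y - x)
      simpa using this
    have h3 : N (x - y) ≤ M * ‖x - y‖ := hNle _
    have h4 : N (y - x) ≤ M * ‖y - x‖ := hNle _
    rw [Real.dist_eq, dist_eq_norm]
    rw [norm_sub_rev y x] at h4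
    rw [abs_le]
    exact ⟨by change -(M * ‖x - y‖) ≤ N x - N y; linarith,
      by change N x - N y ≤ M * ‖x - y‖; linarith⟩
  haveI : Nontrivial (Fin d → ℝ) := by
    refine ⟨0, fun _ => 1, fun h => ?_⟩
    have := congrFun h 0
    norm_num at this
  have hsne : (Metric.sphere (0 : Fin d → ℝ) 1).Nonempty :=
    NormedSpace.sphere_nonempty.mpr zero_le_one
  obtain ⟨x₀, hx₀s, hx₀min⟩ := (isCompact_sphere (0 : Fin d → ℝ) 1).exists_isMinOn hsne
    hcont.continuousOn
  have hx₀norm : ‖x₀‖ = 1 := by simpa using hx₀s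
  have hc : 0 < N x₀ := by
    refine (hNneg x₀).lt_of_ne fun h => ?_
    have : x₀ = 0 := hN_def x₀ h.symm
    rw [this] at hx₀norm
    norm_num at hx₀norm
  refine ⟨(N x₀)⁻¹, inv_nonneg.mpr hc.le, fun x hx j => ?_⟩
  have hxne : x ≠ 0 := by
    intro h
    rw [h, hN0] at hx
    norm_num at hx
  have hxnorm : 0 < ‖x‖ := norm_pos_iff.mpr hxne
  have hu : ‖x‖⁻¹ • x ∈ Metric.sphere (0 : Fin d → ℝ) 1 := by
    simp [norm_smul, abs_of_pos (inv_pos.mpr hxnorm), inv_mul_cancel₀ hxnorm.ne']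
  have hNu : N x₀ ≤ N (‖x‖⁻¹ • x) := isMinOn_iff.mp hx₀min _ hu
  have hNux : N (‖x‖⁻¹ • x) = ‖x‖⁻¹ * N x := by
    rw [hN_smul, abs_of_pos (inv_pos.mpr hxnorm)]
  have hkey : N x₀ * ‖x‖ ≤ 1 := by
    rw [hNux] at hNu
    rw [hx] at hNu
    calc N x₀ * ‖x‖ ≤ (‖x‖⁻¹ * 1) * ‖x‖ := by
          exact mul_le_mul_of_nonneg_right hNu hxnorm.le
      _ = 1 := by field_simp
  have hxb : ‖x‖ ≤ (N x₀)⁻¹ := by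
    have h := mul_le_mul_of_nonneg_left hkey (inv_nonneg.mpr hc.le)
    rwa [← mul_assoc, inv_mul_cancel₀ hc.ne', one_mul, mul_one] at h
  exact (norm_le_pi_norm x j).trans hxb

/-- Lemma S3 of the paper: the reconstruction error of max-stable PCA with `p` components
attains its global infimum (over all nonnegative matrix pairs) at some pair
`(B*, W*) ∈ [0,κ]^{d×p} × [0,1]^{p×d}` with
`κ = (Σ_{k=p+1}^d σ_k + σ_max)/σ_min`. -/
theorem exists_global_minimizer_recErr_in_compact
    {p d : ℕ} (hp : 1 ≤ p) (hpd : p ≤ d)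
    (N : (Fin d → ℝ) → ℝ)
    (hN_tri : ∀ x y, N (x + y) ≤ N x + N y)
    (hN_smul : ∀ (c : ℝ) (x), N (c • x) = |c| * N x)
    (hN_def : ∀ x, N x = 0 → x = 0)
    (S : Measure (Fin d → ℝ)) [IsFiniteMeasure S]
    (hS_sphere : S {a | ¬ ((∀ i, 0 ≤ a i) ∧ N a = 1)} = 0)
    (hS_pos : ∀ j, 0 < ∫ a, a j ∂S) :
    ∃ (B : Fin d → Fin p → ℝ) (W : Fin p → Fin d → ℝ),
      (∀ i j, B i j ∈ Set.Icc (0:ℝ)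
        (((∑ k ∈ univ.filter (fun k : Fin d => p ≤ (k : ℕ)), ∫ a, a k ∂S) +
            ⨆ j : Fin d, ∫ a, a j ∂S) / ⨅ j : Fin d, ∫ a, a j ∂S)) ∧
      (∀ i j, W i j ∈ Set.Icc (0:ℝ) 1) ∧
      recErr S B W =
        sInf {r : ℝ | ∃ (B' : Fin d → Fin p → ℝ) (W' : Fin p → Fin d → ℝ),
          (∀ i j, 0 ≤ B' i j) ∧ (∀ i j, 0 ≤ W' i j) ∧ r = recErr S B' W'} := by
  
  haveI : NeZero p := ⟨Nat.one_le_iff_ne_zero.mp hp⟩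
  haveI : NeZero d := ⟨Nat.one_le_iff_ne_zero.mp (hp.trans hpd)⟩
  set V : ℝ := ∑ k ∈ univ.filter (fun k : Fin d => p ≤ (k : ℕ)), ∫ a, a k ∂S with hVdef
  set σmax : ℝ := ⨆ j : Fin d, ∫ a, a j ∂S with hσmaxdef
  set σmin : ℝ := ⨅ j : Fin d, ∫ a, a j ∂S with hσmindef
  set κ : ℝ := (V + σmax) / σmin with hκdef
  -- basic facts about integrals of coordinates
  have hInt : ∀ j, Integrable (fun a => a j) S := by
    intro j
    by_contra h
    have h0 := integral_undef h
    have := hS_pos j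
    rw [h0] at this
    exact lt_irrefl 0 this
  have hσminpos : 0 < σmin := by
    obtain ⟨j, hj⟩ := exists_eq_ciInf_of_finite (f := fun j : Fin d => ∫ a, a j ∂S)
    rw [hσmindef, ← hj]
    exact hS_pos j
  have hσmin_le : ∀ j, σmin ≤ ∫ a, a j ∂S := fun j =>
    ciInf_le (Set.Finite.bddBelow (Set.finite_range _)) j
  have hle_σmax : ∀ j, (∫ a, a j ∂S) ≤ σmax := by
    intro j
    rw [hσmaxdef]
    exact le_ciSup (Set.Finite.bddAbove (Set.finite_range (fun j : Fin d => ∫ a, a j ∂S))) j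
  have hV0 : 0 ≤ V := Finset.sum_nonneg fun k _ => (hS_pos k).le
  have hκ1 : 1 ≤ κ := by
    rw [hκdef, le_div_iff₀ hσminpos, one_mul]
    have h1 := hσmin_le 0
    have h2 := hle_σmax 0
    linarith
  have hκ0 : 0 ≤ κ := le_trans zero_le_one hκ1
  have hκσ : κ * σmin = V + σmax := div_mul_cancel₀ _ hσminpos.ne'
  -- a.e. facts
  have hae : ∀ᵐ a ∂S, (∀ i, 0 ≤ a i) ∧ N a = 1 := ae_iff.mpr hS_sphere
  obtain ⟨C, hC0, hCb⟩ := exists_coord_bound N hN_tri hN_smul hN_def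
  have haeb : ∀ᵐ a ∂S, (∀ i, 0 ≤ a i) ∧ ∀ j, |a j| ≤ C :=
    hae.mono fun a ha => ⟨ha.1, hCb a ha.2⟩
  -- integrability of the integrand, for arbitrary matrices
  have hIntegrand : ∀ (B : Fin d → Fin p → ℝ) (W : Fin p → Fin d → ℝ),
      Integrable (fun a => ∑ k, |maxVec B (maxVec W a) k - a k|) S := by
    intro B W
    set R : ℝ := max ‖B‖ ‖W‖ with hR
    refine Integrable.mono' (integrable_const ((d : ℝ) * (R * (R * C) + C)))
      (continuous_recon_a B W).aestronglyMeasurable (haeb.mono fun a ha => ?_)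
    refine sum_abs_recon_le (fun k i => ?_) (fun i l => ?_) ha.2
    · exact le_trans ((norm_le_pi_norm (B k) i).trans (norm_le_pi_norm B k)) (le_max_left _ _)
    · exact le_trans ((norm_le_pi_norm (W i) l).trans (norm_le_pi_norm W i)) (le_max_right _ _)
  have hRnonneg : ∀ (B : Fin d → Fin p → ℝ) (W : Fin p → Fin d → ℝ), 0 ≤ recErr S B W :=
    fun B W => integral_nonneg fun a => Finset.sum_nonneg fun k _ => abs_nonneg _
  -- key lower bound
  have hKey : ∀ (B : Fin d → Fin p → ℝ) (W : Fin p → Fin d → ℝ),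
      (∀ k i, 0 ≤ B k i) → ∀ (k : Fin d) (i : Fin p) (l : Fin d),
      B k i * W i l * (∫ a, a l ∂S) - (∫ a, a k ∂S) ≤ recErr S B W := by
    intro B W hB k i l
    have hIL : Integrable (fun a => B k i * W i l * a l - a k) S :=
      ((hInt l).const_mul _).sub (hInt k)
    have hmono : (fun a => B k i * W i l * a l - a k) ≤ᵐ[S]
        fun a => ∑ k', |maxVec B (maxVec W a) k' - a k'| := by
      filter_upwards [hae] with a _
      have h1 : W i l * a l ≤ maxVec W a i := fin_le_ciSup (fun l' => W i l' * a l') l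
      have h2 : B k i * (W i l * a l) ≤ B k i * maxVec W a i :=
        mul_le_mul_of_nonneg_left h1 (hB k i)
      have h3 : B k i * maxVec W a i ≤ maxVec B (maxVec W a) k :=
        fin_le_ciSup (fun i' => B k i' * maxVec W a i') i
      have h5 : maxVec B (maxVec W a) k - a k ≤ |maxVec B (maxVec W a) k - a k| := le_abs_self _
      have h6 : |maxVec B (maxVec W a) k - a k| ≤ ∑ k', |maxVec B (maxVec W a) k' - a k'| :=
        Finset.single_le_sum (f := fun k' => |maxVec B (maxVec W a) k' - a k'|)
          (fun k' _ => abs_nonneg _) (mem_univ k)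
      have h7 : B k i * W i l * a l ≤ maxVec B (maxVec W a) k := by rw [mul_assoc]; linarith
      linarith
    have hle := integral_mono_ae hIL (hIntegrand B W) hmono
    calc B k i * W i l * ∫ a, a l ∂S - ∫ a, a k ∂S
        = ∫ a, (B k i * W i l * a l - a k) ∂S := by
          rw [integral_sub ((hInt l).const_mul _) (hInt k), integral_const_mul]
      _ ≤ recErr S B W := hle
  -- the baseline pair
  set B₀ : Fin d → Fin p → ℝ := fun k i => if (k : ℕ) = (i : ℕ) then 1 else 0 with hB₀def
  set W₀ : Fin p → Fin d → ℝ := fun i l => if (i : ℕ) = (l : ℕ) then 1 else 0 with hW₀def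
  have hB₀mem : ∀ k i, B₀ k i ∈ Set.Icc (0:ℝ) κ := by
    intro k i
    rw [hB₀def]
    dsimp only
    split
    · exact ⟨zero_le_one, hκ1⟩
    · exact ⟨le_refl 0, hκ0⟩
  have hW₀mem : ∀ i l, W₀ i l ∈ Set.Icc (0:ℝ) 1 := by
    intro i l
    rw [hW₀def]
    dsimp only
    split
    · exact ⟨zero_le_one, le_refl 1⟩
    · exact ⟨le_refl 0, zero_le_one⟩
  have hB₀nn : ∀ k i, 0 ≤ B₀ k i := fun k i => (hB₀mem k i).1
  have hW₀nn : ∀ i l, 0 ≤ W₀ i l := fun i l => (hW₀mem i l).1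
  have hBase : recErr S B₀ W₀ = V := by
    have hptwise : ∀ᵐ a ∂S, (∑ k, |maxVec B₀ (maxVec W₀ a) k - a k|)
        = ∑ k ∈ univ.filter (fun k : Fin d => p ≤ (k : ℕ)), a k := by
      filter_upwards [hae] with a ha
      have hW₀v : ∀ i : Fin p, maxVec W₀ a i = a ⟨(i : ℕ), lt_of_lt_of_le i.2 hpd⟩ := by
        intro i
        apply le_antisymm
        · apply ciSup_le
          intro l
          by_cases h : (i : ℕ) = (l : ℕ)
          · have hl : l = ⟨(i : ℕ), lt_of_lt_of_le i.2 hpd⟩ := Fin.ext (by simp [← h])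
            rw [hl, hW₀def]
            dsimp only
            rw [if_pos rfl, one_mul]
          · simp only [hW₀def, if_neg h, zero_mul]
            exact ha.1 _
        · have := fin_le_ciSup (fun l => W₀ i l * a l) ⟨(i : ℕ), lt_of_lt_of_le i.2 hpd⟩
          rw [hW₀def] at this
          dsimp only at this
          rw [if_pos rfl, one_mul] at this
          exact this
      have hrecon : ∀ k : Fin d, maxVec B₀ (maxVec W₀ a) k
          = if (k : ℕ) < p then a k else 0 := by
        intro k
        by_cases hk : (k : ℕ) < p
        · rw [if_pos hk]
          apply le_antisymm
          · apply ciSup_le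
            intro i
            rw [hW₀v i]
            by_cases h : (k : ℕ) = (i : ℕ)
            · have hik : (⟨(i : ℕ), lt_of_lt_of_le i.2 hpd⟩ : Fin d) = k := Fin.ext (by simp [← h])
              rw [hik, hB₀def]
              dsimp only
              rw [if_pos h, one_mul]
            · simp only [hB₀def, if_neg h, zero_mul]
              exact ha.1 _
          · have := fin_le_ciSup (fun i => B₀ k i * maxVec W₀ a i) ⟨(k : ℕ), hk⟩
            rw [hW₀v ⟨(k : ℕ), hk⟩] at this
            have hkk : (⟨((⟨(k : ℕ), hk⟩ : Fin p) : ℕ), lt_of_lt_of_le (⟨(k : ℕ), hk⟩ : Fin p).2 hpd⟩ : Fin d) = k :=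
              Fin.ext rfl
            rw [hkk] at this
            rw [hB₀def] at this
            dsimp only at this
            rw [if_pos rfl, one_mul] at this
            exact this
        · rw [if_neg hk]
          have hz : ∀ i : Fin p, B₀ k i * maxVec W₀ a i = 0 := by
            intro i
            have h : (k : ℕ) ≠ (i : ℕ) := by
              have := i.2
              omega
            rw [hB₀def]
            dsimp only
            rw [if_neg h, zero_mul]
          show (⨆ i, B₀ k i * maxVec W₀ a i) = 0
          simp only [hz]
          exact ciSup_const
      have habs : ∀ k : Fin d, |maxVec B₀ (maxVec W₀ a) k - a k|
          = if p ≤ (k : ℕ) then a k else 0 := by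
        intro k
        rw [hrecon k]
        by_cases hk : (k : ℕ) < p
        · rw [if_pos hk, if_neg (by omega), sub_self, abs_zero]
        · rw [if_neg hk, if_pos (by omega), zero_sub, abs_neg, abs_of_nonneg (ha.1 k)]
      rw [Finset.sum_congr rfl fun k _ => habs k]
      exact (Finset.sum_filter _ _).symm
    rw [recErr, integral_congr_ae hptwise, integral_finset_sum _ (fun k _ => hInt k)]
  -- clipping: any nonnegative pair is dominated by a pair in the box
  have hClip : ∀ (B : Fin d → Fin p → ℝ) (W : Fin p → Fin d → ℝ),
      (∀ k i, 0 ≤ B k i) → (∀ i l, 0 ≤ W i l) →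
      ∃ (B' : Fin d → Fin p → ℝ) (W' : Fin p → Fin d → ℝ),
        (∀ k i, B' k i ∈ Set.Icc (0:ℝ) κ) ∧ (∀ i l, W' i l ∈ Set.Icc (0:ℝ) 1) ∧
        recErr S B' W' ≤ recErr S B W := by
    intro B W hB hW
    set w : Fin p → ℝ := fun i => ⨆ l, W i l with hwdef
    have hwnn : ∀ i, 0 ≤ w i := fun i => le_trans (hW i 0) (fin_le_ciSup (fun l => W i l) 0)
    have hWlew : ∀ i l, W i l ≤ w i := fun i l => fin_le_ciSup (fun l => W i l) l
    set W₁ : Fin p → Fin d → ℝ := fun i l => if w i = 0 then 0 else W i l / w i with hW₁def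
    set B₁ : Fin d → Fin p → ℝ := fun k i => B k i * w i with hB₁def
    have hW₁mem : ∀ i l, W₁ i l ∈ Set.Icc (0:ℝ) 1 := by
      intro i l
      rw [hW₁def]
      dsimp only
      by_cases h : w i = 0
      · rw [if_pos h]; exact ⟨le_refl _, zero_le_one⟩
      · have hwpos : 0 < w i := (hwnn i).lt_of_ne (Ne.symm h)
        rw [if_neg h]
        exact ⟨div_nonneg (hW i l) hwpos.le, (div_le_one hwpos).mpr (hWlew i l)⟩
    have hprod : ∀ (a : Fin d → ℝ) (k : Fin d),
        maxVec B₁ (maxVec W₁ a) k = maxVec B (maxVec W a) k := by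
      intro a k
      unfold maxVec
      congr 1
      funext i
      by_cases h : w i = 0
      · have hWz : ∀ l, W i l = 0 := fun l =>
          le_antisymm (h ▸ hWlew i l) (hW i l)
        simp [hB₁def, hW₁def, h, hWz, ciSup_const]
      · have hwpos : 0 < w i := (hwnn i).lt_of_ne (Ne.symm h)
        simp only [hB₁def, hW₁def, if_neg h]
        rw [mul_assoc]
        congr 1
        rw [Real.mul_iSup_of_nonneg hwpos.le]
        congr 1
        funext l
        field_simp
    have hEq : recErr S B₁ W₁ = recErr S B W := by
      unfold recErr
      congr 1
      funext a
      exact Finset.sum_congr rfl fun k _ => by rw [hprod a k]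
    by_cases hbig : ∀ k i, B₁ k i ≤ κ
    · exact ⟨B₁, W₁, fun k i => ⟨mul_nonneg (hB k i) (hwnn i), hbig k i⟩, hW₁mem, hEq.le⟩
    · push_neg at hbig
      obtain ⟨k, i, hki⟩ := hbig
      have hB₁nn : 0 ≤ B₁ k i := mul_nonneg (hB k i) (hwnn i)
      obtain ⟨l₀, hl₀⟩ := exists_eq_ciSup_of_finite (f := fun l => W i l)
      have hstep := hKey B W hB k i l₀
      have e1 : B k i * W i l₀ = B₁ k i := by rw [hB₁def]; dsimp only; rw [hl₀, hwdef]
      have e2 : σmin ≤ ∫ a, a l₀ ∂S := hσmin_le l₀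
      have e3 : (∫ a, a k ∂S) ≤ σmax := hle_σmax k
      have h1 : V < recErr S B W := by
        have h4 : B₁ k i * σmin ≤ B₁ k i * (∫ a, a l₀ ∂S) :=
          mul_le_mul_of_nonneg_left e2 hB₁nn
        have h5 : κ * σmin < B₁ k i * σmin :=
          mul_lt_mul_of_pos_right hki hσminpos
        rw [e1] at hstep
        linarith
      exact ⟨B₀, W₀, hB₀mem, hW₀mem, by rw [hBase]; exact h1.le⟩
  -- continuity of the reconstruction error in the pair of matrices
  have hfc : Continuous (fun q : (Fin d → Fin p → ℝ) × (Fin p → Fin d → ℝ) =>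
      recErr S q.1 q.2) := by
    rw [continuous_iff_continuousAt]
    intro q₀
    unfold recErr
    set R : ℝ := ‖q₀‖ + 1 with hRdef
    apply continuousAt_of_dominated (bound := fun _ => (d : ℝ) * (R * (R * C) + C))
    · exact Filter.Eventually.of_forall fun q =>
        (continuous_recon_a q.1 q.2).aestronglyMeasurable
    · filter_upwards [Metric.ball_mem_nhds q₀ one_pos] with q hq
      filter_upwards [haeb] with a ha
      have hq' : ‖q‖ ≤ R := by
        rw [Metric.mem_ball, dist_eq_norm] at hq
        have := norm_sub_norm_le q q₀
        rw [hRdef]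
        linarith
      refine sum_abs_recon_le (fun k i => ?_) (fun i l => ?_) ha.2
      · exact le_trans ((norm_le_pi_norm (q.1 k) i).trans
          ((norm_le_pi_norm q.1 k).trans (norm_fst_le q))) hq'
      · exact le_trans ((norm_le_pi_norm (q.2 i) l).trans
          ((norm_le_pi_norm q.2 i).trans (norm_snd_le q))) hq'
    · exact integrable_const _
    · exact Filter.Eventually.of_forall fun a => (continuous_recon_pair a).continuousAt
  -- extreme value theorem on the compact box
  set K : Set ((Fin d → Fin p → ℝ) × (Fin p → Fin d → ℝ)) :=
    (Set.univ.pi fun _ => Set.univ.pi fun _ => Set.Icc (0:ℝ) κ) ×ˢ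
      (Set.univ.pi fun _ => Set.univ.pi fun _ => Set.Icc (0:ℝ) 1) with hKdef
  have hKcomp : IsCompact K :=
    (isCompact_univ_pi fun _ => isCompact_univ_pi fun _ => isCompact_Icc).prod
      (isCompact_univ_pi fun _ => isCompact_univ_pi fun _ => isCompact_Icc)
  have hmemK : ∀ (B : Fin d → Fin p → ℝ) (W : Fin p → Fin d → ℝ),
      (∀ k i, B k i ∈ Set.Icc (0:ℝ) κ) → (∀ i l, W i l ∈ Set.Icc (0:ℝ) 1) → (B, W) ∈ K := by
    intro B W hB hW
    rw [hKdef]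
    constructor
    · intro k _
      intro i _
      exact hB k i
    · intro i _
      intro l _
      exact hW i l
  have hKne : K.Nonempty := ⟨(B₀, W₀), hmemK B₀ W₀ hB₀mem hW₀mem⟩
  obtain ⟨q, hqK, hqmin⟩ := hKcomp.exists_isMinOn hKne hfc.continuousOn
  have hqB : ∀ k i, q.1 k i ∈ Set.Icc (0:ℝ) κ := by
    intro k i
    have h1 := hqK.1
    exact h1 k (Set.mem_univ k) i (Set.mem_univ i)
  have hqW : ∀ i l, q.2 i l ∈ Set.Icc (0:ℝ) 1 := by
    intro i l
    have h2 := hqK.2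
    exact h2 i (Set.mem_univ i) l (Set.mem_univ l)
  refine ⟨q.1, q.2, hqB, hqW, ?_⟩
  have hEne : {r : ℝ | ∃ (B' : Fin d → Fin p → ℝ) (W' : Fin p → Fin d → ℝ),
      (∀ i j, 0 ≤ B' i j) ∧ (∀ i j, 0 ≤ W' i j) ∧ r = recErr S B' W'}.Nonempty :=
    ⟨recErr S B₀ W₀, B₀, W₀, hB₀nn, hW₀nn, rfl⟩
  have hEbdd : BddBelow {r : ℝ | ∃ (B' : Fin d → Fin p → ℝ) (W' : Fin p → Fin d → ℝ),
      (∀ i j, 0 ≤ B' i j) ∧ (∀ i j, 0 ≤ W' i j) ∧ r = recErr S B' W'} := by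
    refine ⟨0, ?_⟩
    rintro r ⟨B', W', _, _, rfl⟩
    exact hRnonneg B' W'
  apply le_antisymm
  · apply le_csInf hEne
    rintro r ⟨B', W', hB', hW', rfl⟩
    obtain ⟨B'', W'', hB''m, hW''m, hle⟩ := hClip B' W' hB' hW'
    have hmem : (B'', W'') ∈ K := hmemK B'' W'' hB''m hW''m
    exact le_trans (isMinOn_iff.mp hqmin _ hmem) hle
  · exact csInf_le hEbdd ⟨q.1, q.2, fun k i => (hqB k i).1, fun i l => (hqW i l).1, rfl⟩
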